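/- Let n₀, m₁, ..., m₇ be a fundamental system in genus 3 (8 characteristics, every triple azygetic, with n₀ even and all mᵢ odd). Then the 21 sums n₀ + mᵢ + mⱼ (1 ≤ i < j ≤ 7) are pairwise distinct odd characteristics, distinct from m₁,...,m₇, and together with m₁,...,m₇ they exhaust all 28 odd characteristics of F_2^6. -/
import Mathlib


open Finset

/-- The space of theta characteristics in genus `g`: pairs `(m', m'')` of vectors in `F_2^g`. -/
abbrev V (g : ℕ) := (Fin g → ZMod 2) × (Fin g → ZMod 2)

/-- The `F_2`-inner product of two vectors. -/
def dotp {g : ℕ} (a b : Fin g → ZMod 2) : ZMod 2 := ∑ i, a i * b i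

/-- The parity invariant `m'·m'' ∈ F_2`; `m` is even iff `par m = 0`. -/
def par {g : ℕ} (m : V g) : ZMod 2 := dotp m.1 m.2

/-- The sign `e(m) = (-1)^{m'·m''}`. -/
def e {g : ℕ} (m : V g) : ℤ := (-1) ^ (par m).val

/-- The syzygy invariant `e(m₁,m₂,m₃) = e(m₁)e(m₂)e(m₃)e(m₁+m₂+m₃)`. -/
def e3 {g : ℕ} (m₁ m₂ m₃ : V g) : ℤ := e m₁ * e m₂ * e m₃ * e (m₁ + m₂ + m₃)

/-- The standard symplectic form `⟨m,n⟩ = m'·n'' + m''·n'` on `F_2^{2g}`. -/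
def sp {g : ℕ} (m n : V g) : ZMod 2 := dotp m.1 n.2 + dotp m.2 n.1

lemma dotp_comm {g : ℕ} (a b : Fin g → ZMod 2) : dotp a b = dotp b a :=
  Finset.sum_congr rfl fun i _ => mul_comm _ _

lemma dotp_add_left {g : ℕ} (a b c : Fin g → ZMod 2) :
    dotp (a + b) c = dotp a c + dotp b c := by
  simp [dotp, add_mul, Finset.sum_add_distrib]

lemma sp_comm {g : ℕ} (a b : V g) : sp a b = sp b a := by
  rw [sp, sp, dotp_comm, dotp_comm a.2, add_comm]

lemma sp_add_left {g : ℕ} (a b c : V g) : sp (a + b) c = sp a c + sp b c := by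
  simp only [sp, Prod.fst_add, Prod.snd_add, dotp_add_left]; ring

lemma sp_self {g : ℕ} (a : V g) : sp a a = 0 := by
  rw [sp, dotp_comm]; exact CharTwo.add_self_eq_zero _

lemma par_add {g : ℕ} (a b : V g) : par (a + b) = par a + par b + sp a b := by
  simp only [par, sp, dotp, Prod.fst_add, Prod.snd_add, Pi.add_apply,
    ← Finset.sum_add_distrib]
  exact Finset.sum_congr rfl fun i _ => by ring

lemma e_mul (a b : ZMod 2) : (-1 : ℤ) ^ (a + b).val = ((-1 : ℤ)) ^ a.val * ((-1 : ℤ)) ^ b.val := by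
  revert a b; decide

lemma e3_iff {g : ℕ} (m₁ m₂ m₃ : V g) :
    e3 m₁ m₂ m₃ = -1 ↔ par m₁ + par m₂ + par m₃ + par (m₁ + m₂ + m₃) = 1 := by
  have h : ∀ c : ZMod 2, ((-1 : ℤ) ^ c.val = -1 ↔ c = 1) := by decide
  have : e3 m₁ m₂ m₃ = (-1 : ℤ) ^ ((par m₁ + par m₂ + par m₃ + par (m₁ + m₂ + m₃)).val) := by
    simp only [e3, e, e_mul]
  rw [this]; exact h _

lemma e3_sp {g : ℕ} (m₁ m₂ m₃ : V g) :
    e3 m₁ m₂ m₃ = -1 ↔ sp m₁ m₂ + sp m₁ m₃ + sp m₂ m₃ = 1 := by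
  rw [e3_iff, par_add, par_add, sp_add_left]
  generalize sp m₁ m₂ = x
  generalize sp m₁ m₃ = y
  generalize sp m₂ m₃ = z
  generalize par m₁ = a
  generalize par m₂ = b
  generalize par m₃ = c
  revert a b c x y z; decide

lemma V_add_self {g : ℕ} (x : V g) : x + x = 0 := by
  have h : ∀ v : Fin g → ZMod 2, v + v = 0 :=
    fun v => funext fun i => CharTwo.add_self_eq_zero (v i)
  exact Prod.ext (h x.1) (h x.2)

lemma V_eq_of_add_eq_zero {g : ℕ} {a b : V g} (h : a + b = 0) : a = b := by
  calc a = a + (b + b) := by rw [V_add_self, add_zero]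
    _ = (a + b) + b := by abel
    _ = b := by rw [h, zero_add]

lemma V_add_eq_zero_of_eq {g : ℕ} {a b : V g} (h : a = b) : a + b = 0 := by
  rw [h, V_add_self]

set_option synthInstance.maxSize 2000 in
set_option synthInstance.maxHeartbeats 1000000 in
set_option maxHeartbeats 1000000 in
lemma zmod2_contra : ∀ ai aj ak al sil sjl skl sij sik sjk : ZMod 2,
    ai + al + sil = 1 → aj + al + sjl = 1 → ak + al + skl = 1 →
    al = sil + sjl + skl → ai = sij + sik → aj = sij + sjk → ak = sik + sjk →
    False := by decide

lemma exists_fourth : ∀ i j k : Fin 7, ∃ l : Fin 7, l ≠ i ∧ l ≠ j ∧ l ≠ k := by decide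

lemma pair_eq_of_lt {α : Type*} [DecidableEq α] [LinearOrder α] {i j k l : α}
    (hij : i < j) (hkl : k < l) (h : ({i, j} : Finset α) = {k, l}) : i = k ∧ j = l := by
  have hi : i = k ∨ i = l := by
    have : i ∈ ({k, l} : Finset α) := h ▸ (by simp)
    simpa using this
  have hj : j = k ∨ j = l := by
    have : j ∈ ({k, l} : Finset α) := h ▸ (by simp)
    simpa using this
  rcases hi with rfl | rfl <;> rcases hj with rfl | rfl
  · exact absurd hij (lt_irrefl _)
  · exact ⟨rfl, rfl⟩
  · exact absurd (hij.trans hkl) (lt_irrefl _)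
  · exact absurd hij (lt_irrefl _)

lemma card_lt_pairs :
    ((univ : Finset (Fin 7 × Fin 7)).filter (fun p => p.1 < p.2)).card = 21 := by decide

lemma card_odd : ((univ : Finset (V 3)).filter (fun x => par x = 1)).card = 28 := by decide

theorem fundamental_system_odd_characteristics (n₀ : V 3) (m : Fin 7 → V 3)
    (hn : par n₀ = 0) (hm : ∀ i, par (m i) = 1)
    (hinj : Function.Injective m) (hne : ∀ i, n₀ ≠ m i)
    (haz₁ : ∀ i j k : Fin 7, i ≠ j → i ≠ k → j ≠ k → e3 (m i) (m j) (m k) = -1)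
    (haz₂ : ∀ i j : Fin 7, i ≠ j → e3 n₀ (m i) (m j) = -1) :
    (∀ i j k l : Fin 7, i ≠ j → k ≠ l → n₀ + m i + m j = n₀ + m k + m l →
      ({i, j} : Finset (Fin 7)) = {k, l}) ∧
    (∀ i j : Fin 7, i ≠ j → par (n₀ + m i + m j) = 1 ∧ ∀ k, n₀ + m i + m j ≠ m k) ∧
    (univ.image m ∪
        (univ.filter (fun p : Fin 7 × Fin 7 => p.1 ≠ p.2)).image
          (fun p => n₀ + m p.1 + m p.2) =
      univ.filter (fun x : V 3 => par x = 1)) ∧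
    (univ.filter (fun x : V 3 => par x = 1)).card = 28 := by
  -- parity of triple sums of odd characteristics
  have hpar3 : ∀ i j k : Fin 7, i ≠ j → i ≠ k → j ≠ k → par (m i + m j + m k) = 0 := by
    intro i j k h1 h2 h3
    have h := (e3_iff _ _ _).mp (haz₁ i j k h1 h2 h3)
    rw [hm i, hm j, hm k] at h
    have key : ∀ p : ZMod 2, (1 : ZMod 2) + 1 + 1 + p = 1 → p = 0 := by decide
    exact key _ h
  -- parity of n₀ + mᵢ + mⱼ
  have hparn : ∀ i j : Fin 7, i ≠ j → par (n₀ + m i + m j) = 1 := by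
    intro i j hij
    have h := (e3_iff _ _ _).mp (haz₂ i j hij)
    rw [hn, hm i, hm j] at h
    have key : ∀ p : ZMod 2, (0 : ZMod 2) + 1 + 1 + p = 1 → p = 1 := by decide
    exact key _ h
  have hsp : ∀ i j : Fin 7, i ≠ j →
      sp n₀ (m i) + sp n₀ (m j) + sp (m i) (m j) = 1 :=
    fun i j h => (e3_sp _ _ _).mp (haz₂ i j h)
  -- the sums n₀ + mᵢ + mⱼ are never equal to any mₖ
  have hne2 : ∀ i j : Fin 7, i ≠ j → ∀ k, n₀ + m i + m j ≠ m k := by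
    intro i j hij k heq
    by_cases hki : k = i
    · subst hki
      have h0 : (n₀ + m k + m j) + m k = 0 := V_add_eq_zero_of_eq heq
      rw [show (n₀ + m k + m j) + m k = n₀ + m j + (m k + m k) from by abel,
        V_add_self, add_zero] at h0
      exact hne j (V_eq_of_add_eq_zero h0)
    · by_cases hkj : k = j
      · subst hkj
        have h0 : (n₀ + m i + m k) + m k = 0 := V_add_eq_zero_of_eq heq
        rw [show (n₀ + m i + m k) + m k = n₀ + m i + (m k + m k) from by abel,
          V_add_self, add_zero] at h0
        exact hne i (V_eq_of_add_eq_zero h0)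
      · -- k distinct from i, j : derive n₀ = mᵢ + mⱼ + mₖ and contradiction via sp
        have h0 : (n₀ + m i + m j) + m k = 0 := V_add_eq_zero_of_eq heq
        rw [show (n₀ + m i + m j) + m k = n₀ + (m i + m j + m k) from by abel] at h0
        have hn0 : n₀ = m i + m j + m k := V_eq_of_add_eq_zero h0
        obtain ⟨l, hli, hlj, hlk⟩ := exists_fourth i j k
        have h1 := hsp i l (Ne.symm hli)
        have h2 := hsp j l (Ne.symm hlj)
        have h3 := hsp k l (Ne.symm hlk)
        have h4 : sp n₀ (m l) = sp (m i) (m l) + sp (m j) (m l) + sp (m k) (m l) := by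
          rw [hn0, sp_add_left, sp_add_left]
        have h5 : sp n₀ (m i) = sp (m i) (m j) + sp (m i) (m k) := by
          rw [hn0, sp_add_left, sp_add_left, sp_self, sp_comm (m j) (m i),
            sp_comm (m k) (m i), zero_add]
        have h6 : sp n₀ (m j) = sp (m i) (m j) + sp (m j) (m k) := by
          rw [hn0, sp_add_left, sp_add_left, sp_self, sp_comm (m k) (m j), add_zero]
        have h7 : sp n₀ (m k) = sp (m i) (m k) + sp (m j) (m k) := by
          rw [hn0, sp_add_left, sp_add_left, sp_self, add_zero]
        exact zmod2_contra _ _ _ _ _ _ _ _ _ _ h1 h2 h3 h4 h5 h6 h7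
  -- part 1 : injectivity of unordered pairs
  have part1 : ∀ i j k l : Fin 7, i ≠ j → k ≠ l → n₀ + m i + m j = n₀ + m k + m l →
      ({i, j} : Finset (Fin 7)) = {k, l} := by
    intro i j k l hij hkl heq
    rw [add_assoc, add_assoc] at heq
    have h2 : m i + m j = m k + m l := add_left_cancel heq
    by_cases hik : i = k
    · subst hik
      have : j = l := hinj (add_left_cancel h2)
      subst this; rfl
    · by_cases hil : i = l
      · subst hil
        rw [add_comm (m i) (m j)] at h2
        have : j = k := hinj (add_right_cancel h2)
        subst this
        exact Finset.pair_comm i j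
      · by_cases hjk : j = k
        · subst hjk
          rw [add_comm (m i) (m j)] at h2
          have : i = l := hinj (add_left_cancel h2)
          exact absurd this hil
        · by_cases hjl : j = l
          · subst hjl
            have : i = k := hinj (add_right_cancel h2)
            exact absurd this hik
          · -- all four distinct : parity contradiction
            have h0 : (m i + m j) + (m k + m l) = 0 := V_add_eq_zero_of_eq h2
            rw [show (m i + m j) + (m k + m l) = (m i + m j + m k) + m l from by abel]
                at h0
            have hml : m i + m j + m k = m l := V_eq_of_add_eq_zero h0
            have hc : (0 : ZMod 2) = 1 := by
              rw [← hpar3 i j k hij hik hjk, hml]; exact hm l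
            exact absurd hc (by decide)
  -- part 3 : the union is exactly the odd characteristics
  have part3 : (univ.image m ∪
        (univ.filter (fun p : Fin 7 × Fin 7 => p.1 ≠ p.2)).image
          (fun p => n₀ + m p.1 + m p.2) =
      univ.filter (fun x : V 3 => par x = 1)) := by
    set A := (univ : Finset (Fin 7)).image m with hA
    set B := ((univ : Finset (Fin 7 × Fin 7)).filter (fun p => p.1 ≠ p.2)).image
      (fun p => n₀ + m p.1 + m p.2) with hBdef
    set B' := ((univ : Finset (Fin 7 × Fin 7)).filter (fun p => p.1 < p.2)).image
      (fun p => n₀ + m p.1 + m p.2) with hB'def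
    have hBB' : B = B' := by
      apply Finset.Subset.antisymm
      · intro x hx
        simp only [hBdef, hB'def, mem_image, mem_filter, mem_univ, true_and] at hx ⊢
        obtain ⟨p, hp, rfl⟩ := hx
        rcases lt_or_gt_of_ne hp with h | h
        · exact ⟨p, h, rfl⟩
        · exact ⟨(p.2, p.1), h, by show n₀ + m p.2 + m p.1 = n₀ + m p.1 + m p.2; abel⟩
      · intro x hx
        simp only [hBdef, hB'def, mem_image, mem_filter, mem_univ, true_and] at hx ⊢
        obtain ⟨p, hp, rfl⟩ := hx
        exact ⟨p, ne_of_lt hp, rfl⟩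
    have hsub : A ∪ B ⊆ univ.filter (fun x : V 3 => par x = 1) := by
      intro x hx
      rw [mem_union] at hx
      rcases hx with hx | hx
      · simp only [hA, mem_image, mem_univ, true_and] at hx
        obtain ⟨i, rfl⟩ := hx
        simp [mem_filter, hm i]
      · simp only [hBdef, mem_image, mem_filter, mem_univ, true_and] at hx
        obtain ⟨p, hp, rfl⟩ := hx
        simp [mem_filter, hparn p.1 p.2 hp]
    have hdisj : Disjoint A B := by
      rw [Finset.disjoint_left]
      intro x hxA hxB
      simp only [hA, mem_image, mem_univ, true_and] at hxA
      simp only [hBdef, mem_image, mem_filter, mem_univ, true_and] at hxB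
      obtain ⟨k, rfl⟩ := hxA
      obtain ⟨p, hp, hpx⟩ := hxB
      exact hne2 p.1 p.2 hp k hpx
    have hcardA : A.card = 7 := by
      rw [hA, Finset.card_image_of_injective _ hinj, card_univ]
      simp
    have hcardB : B.card = 21 := by
      rw [hBB', hB'def]
      rw [Finset.card_image_of_injOn, card_lt_pairs]
      intro p hp q hq heq
      simp only [mem_coe, mem_filter, mem_univ, true_and] at hp hq
      have hset := part1 p.1 p.2 q.1 q.2 (ne_of_lt hp) (ne_of_lt hq) heq
      obtain ⟨h1, h2⟩ := pair_eq_of_lt hp hq hset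
      exact Prod.ext h1 h2
    have hcardU : (A ∪ B).card = 28 := by
      rw [Finset.card_union_of_disjoint hdisj, hcardA, hcardB]
    exact Finset.eq_of_subset_of_card_le hsub (by rw [hcardU, card_odd])
  exact ⟨part1, fun i j hij => ⟨hparn i j hij, hne2 i j hij⟩, part3, card_odd⟩
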